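/- arXiv:2204.06181 — 2 statements merged into one kernel-verified Lean document; each statement's English description precedes it below -/
import Mathlib

section
/- Assume S(A,b) ≠ ∅. Then S(A,b) equals the union over all selections e (with e(i) ∈ J̄_i for each i) of the boxes {x ∈ [0,1]^n : X(e) ≤ x ≤ x̄}. -/
/-- The Łukasiewicz t-norm. -/
noncomputable def TL (a x : ℝ) : ℝ := max (a + x - 1) 0

/-- The candidate maximum solution `x̄` (empty min = 1, handled by the `if`). -/
noncomputable def xbar {m n : ℕ} [NeZero m] (A : Fin m → Fin n → ℝ) (b : Fin m → ℝ)
    (j : Fin n) : ℝ :=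
  Finset.univ.inf' Finset.univ_nonempty
    (fun i => if b i ≤ A i j then b i + 1 - A i j else 1)

/-- `x` is a feasible solution of the system `A φ x = b`. -/
def Feasible {m n : ℕ} [NeZero m] [NeZero n] (A : Fin m → Fin n → ℝ) (b : Fin m → ℝ)
    (x : Fin n → ℝ) : Prop :=
  (∀ j, x j ∈ Set.Icc (0:ℝ) 1) ∧
  ∀ i, Finset.univ.sup' Finset.univ_nonempty (fun j => TL (A i j) (x j)) = b i

/-- The candidate minimal point `X(e)` associated to a selection `e`
(empty max = 0, handled by the `if`). -/
noncomputable def Xe {m n : ℕ} [NeZero m] (A : Fin m → Fin n → ℝ) (b : Fin m → ℝ)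
    (e : Fin m → Fin n) (j : Fin n) : ℝ :=
  Finset.univ.sup' Finset.univ_nonempty
    (fun i => if e i = j ∧ b i ≠ 0 then b i + 1 - A i j else 0)

/-- `e` is a valid selection: `e i ∈ J̄ᵢ` for every `i`. -/
def ValidSel {m n : ℕ} [NeZero m] (A : Fin m → Fin n → ℝ) (b : Fin m → ℝ)
    (e : Fin m → Fin n) : Prop :=
  ∀ i, b i ≤ A i (e i) ∧ TL (A i (e i)) (xbar A b (e i)) = b i

lemma tl_upper {a x b' : ℝ} (hb : 0 ≤ b') (hx1 : x ≤ 1)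
    (h : x ≤ if b' ≤ a then b' + 1 - a else 1) : TL a x ≤ b' := by
  unfold TL
  split_ifs at h with hc
  · exact max_le (by linarith) hb
  · exact max_le (by linarith [not_le.mp hc]) hb

lemma xbar_le_one {m n : ℕ} [NeZero m] (A : Fin m → Fin n → ℝ) (b : Fin m → ℝ)
    (j : Fin n) : xbar A b j ≤ 1 := by
  have i : Fin m := ⟨0, Nat.pos_of_ne_zero (NeZero.ne m)⟩
  refine le_trans (Finset.inf'_le _ (Finset.mem_univ i)) ?_
  split_ifs with hc
  · linarith
  · exact le_rfl

theorem stmt_12 (m n : ℕ) [NeZero m] [NeZero n] (A : Fin m → Fin n → ℝ) (b : Fin m → ℝ)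
    (hA : ∀ i j, A i j ∈ Set.Icc (0:ℝ) 1) (hb : ∀ i, b i ∈ Set.Icc (0:ℝ) 1)
    (hS : ∃ x, Feasible A b x) :
    {x | Feasible A b x} =
      ⋃ e ∈ {e : Fin m → Fin n | ValidSel A b e},
        {x : Fin n → ℝ | (∀ j, x j ∈ Set.Icc (0:ℝ) 1) ∧
          ∀ j, Xe A b e j ≤ x j ∧ x j ≤ xbar A b j} := by
  ext x
  simp only [Set.mem_setOf_eq, Set.mem_iUnion, exists_prop]
  constructor
  · rintro ⟨hx01, hxeq⟩
    have hx1 : ∀ j, x j ≤ 1 := fun j => (hx01 j).2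
    have hx0 : ∀ j, 0 ≤ x j := fun j => (hx01 j).1
    have hxbar : ∀ j, x j ≤ xbar A b j := by
      intro j
      apply Finset.le_inf'
      intro i _
      split_ifs with hc
      · by_contra hlt
        push_neg at hlt
        have h1 : TL (A i j) (x j) ≤ b i := by
          rw [← hxeq i]
          exact Finset.le_sup' (fun j => TL (A i j) (x j)) (Finset.mem_univ j)
        have h2 : b i < TL (A i j) (x j) :=
          lt_of_lt_of_le (by linarith) (le_max_left _ _)
        linarith
      · exact hx1 j
    have hch : ∀ i : Fin m, ∃ j : Fin n, TL (A i j) (x j) = b i := by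
      intro i
      obtain ⟨j, _, hj⟩ := Finset.exists_mem_eq_sup' (Finset.univ_nonempty)
        (fun j => TL (A i j) (x j))
      exact ⟨j, by rw [← hj]; exact hxeq i⟩
    choose e he using hch
    have key : ∀ i, b i ≠ 0 → A i (e i) + x (e i) - 1 = b i := by
      intro i hbi
      have hbpos : 0 < b i := lt_of_le_of_ne (hb i).1 (Ne.symm hbi)
      have h := he i
      unfold TL at h
      rcases le_or_gt (A i (e i) + x (e i) - 1) 0 with hle | hlt
      · rw [max_eq_right hle] at h; linarith
      · rwa [max_eq_left hlt.le] at h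
    have hbA : ∀ i, b i ≤ A i (e i) := by
      intro i
      rcases eq_or_ne (b i) 0 with h0 | h0
      · rw [h0]; exact (hA i (e i)).1
      · have := key i h0
        linarith [hx1 (e i)]
    refine ⟨e, ?_, hx01, fun j => ⟨?_, hxbar j⟩⟩
    · intro i
      refine ⟨hbA i, le_antisymm ?_ ?_⟩
      · exact tl_upper (hb i).1 (xbar_le_one A b (e i))
          (Finset.inf'_le _ (Finset.mem_univ i))
      · have hmono : TL (A i (e i)) (x (e i)) ≤ TL (A i (e i)) (xbar A b (e i)) := by
          unfold TL
          exact max_le_max (by linarith [hxbar (e i)]) le_rfl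
        rw [← he i]; exact hmono
    · apply Finset.sup'_le
      intro i _
      split_ifs with hc
      · obtain ⟨hej, hbi⟩ := hc
        have hk := key i hbi
        subst hej
        linarith
      · exact hx0 j
  · rintro ⟨e, hval, hx01, hbox⟩
    refine ⟨hx01, fun i => ?_⟩
    apply le_antisymm
    · apply Finset.sup'_le
      intro j _
      exact tl_upper (hb i).1 (hx01 j).2
        (le_trans (hbox j).2 (Finset.inf'_le _ (Finset.mem_univ i)))
    · have h1 : b i ≤ TL (A i (e i)) (x (e i)) := by
        rcases eq_or_ne (b i) 0 with h0 | h0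
        · rw [h0]; exact le_max_right _ _
        · have hXge : b i + 1 - A i (e i) ≤ x (e i) := by
            refine le_trans ?_ (hbox (e i)).1
            have h := Finset.le_sup' (s := Finset.univ) (fun i' =>
              if e i' = e i ∧ b i' ≠ 0 then b i' + 1 - A i' (e i) else 0)
              (Finset.mem_univ i)
            rw [if_pos ⟨rfl, h0⟩] at h
            unfold Xe
            exact h
          exact le_trans (by linarith) (le_max_left _ _)
      exact le_trans h1 (Finset.le_sup' (fun j => TL (A i j) (x j)) (Finset.mem_univ (e i)))
end

section
/- Every minimal solution of the system A φ x = b (w.r.t. the componentwise order) is of the form X(e) for some selection e with e(i) ∈ J̄_i for all i. -/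
lemma TL_mono (a : ℝ) {x y : ℝ} (h : x ≤ y) : TL a x ≤ TL a y :=
  max_le_max (by linarith) le_rfl

theorem stmt_14 (m n : ℕ) [NeZero m] [NeZero n] (A : Fin m → Fin n → ℝ) (b : Fin m → ℝ)
    (hA : ∀ i j, A i j ∈ Set.Icc (0:ℝ) 1) (hb : ∀ i, b i ∈ Set.Icc (0:ℝ) 1)
    (x : Fin n → ℝ) (hx : Feasible A b x)
    (hmin : ∀ y, Feasible A b y → (∀ j, y j ≤ x j) → y = x) :
    ∃ e : Fin m → Fin n, ValidSel A b e ∧ x = Xe A b e := by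
  obtain ⟨hx01, hxeq⟩ := hx
  have hTLle : ∀ i j, TL (A i j) (x j) ≤ b i := by
    intro i j
    rw [← hxeq i]
    exact Finset.le_sup' (fun j => TL (A i j) (x j)) (Finset.mem_univ j)
  have hsel : ∀ i : Fin m, ∃ j : Fin n, TL (A i j) (x j) = b i := by
    intro i
    obtain ⟨j, _, hj⟩ := Finset.exists_mem_eq_sup' (Finset.univ_nonempty)
      (fun j => TL (A i j) (x j))
    exact ⟨j, by rw [← hxeq i, hj]⟩
  choose e he using hsel
  -- x ≤ xbar
  have hxle : ∀ j, x j ≤ xbar A b j := by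
    intro j
    apply Finset.le_inf'
    intro i _
    split_ifs with h
    · have := hTLle i j
      have h1 : A i j + x j - 1 ≤ b i := le_trans (le_max_left _ _) this
      linarith
    · exact (hx01 j).2
  -- TL (A i j) (xbar j) ≤ b i
  have hxbarle : ∀ i j, TL (A i j) (xbar A b j) ≤ b i := by
    intro i j
    have hinf : xbar A b j ≤ (if b i ≤ A i j then b i + 1 - A i j else 1) :=
      Finset.inf'_le _ (Finset.mem_univ i)
    unfold TL
    split_ifs at hinf with h
    · apply max_le (by linarith) (hb i).1
    · apply max_le (by push_neg at h; linarith [(hA i j).2]) (hb i).1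
  -- key: if b i ≠ 0 then A i (e i) + x (e i) - 1 = b i
  have key : ∀ i, b i ≠ 0 → A i (e i) + x (e i) - 1 = b i := by
    intro i hbi
    have h := he i
    unfold TL at h
    rcases le_or_gt (A i (e i) + x (e i) - 1) 0 with h0 | h0
    · rw [max_eq_right h0] at h; exact absurd h.symm hbi
    · rwa [max_eq_left h0.le] at h
  have hvalid : ValidSel A b e := by
    intro i
    have hble : b i ≤ A i (e i) := by
      rcases eq_or_ne (b i) 0 with hb0 | hb0
      · rw [hb0]; exact (hA i (e i)).1
      · have := key i hb0
        have := (hx01 (e i)).2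
        linarith
    refine ⟨hble, le_antisymm (hxbarle i (e i)) ?_⟩
    calc b i = TL (A i (e i)) (x (e i)) := (he i).symm
      _ ≤ TL (A i (e i)) (xbar A b (e i)) := TL_mono _ (hxle (e i))
  set y := Xe A b e with hy
  have hterm : ∀ i j, (if e i = j ∧ b i ≠ 0 then b i + 1 - A i j else 0) ≤ x j := by
    intro i j
    split_ifs with h
    · obtain ⟨hej, hbi⟩ := h
      have := key i hbi
      rw [hej] at this
      linarith
    · exact (hx01 j).1
  have hyx : ∀ j, y j ≤ x j := by
    intro j
    apply Finset.sup'_le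
    intro i _
    exact hterm i j
  have hy0 : ∀ j, 0 ≤ y j := by
    intro j
    obtain ⟨i0, _⟩ := Finset.univ_nonempty (α := Fin m)
    refine le_trans ?_ (Finset.le_sup' _ (Finset.mem_univ i0))
    split_ifs with h
    · obtain ⟨_, hbi⟩ := h
      have := (hb i0).1
      have := (hA i0 j).2
      linarith
    · exact le_rfl
  have hyfeas : Feasible A b y := by
    refine ⟨fun j => ⟨hy0 j, le_trans (hyx j) (hx01 j).2⟩, ?_⟩
    intro i
    apply le_antisymm
    · apply Finset.sup'_le
      intro j _
      exact le_trans (TL_mono _ (hyx j)) (hTLle i j)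
    · rcases eq_or_ne (b i) 0 with hb0 | hb0
      · obtain ⟨j0, _⟩ := Finset.univ_nonempty (α := Fin n)
        refine le_trans ?_ (Finset.le_sup' _ (Finset.mem_univ j0))
        rw [hb0]; exact le_max_right _ _
      · have h1 : b i + 1 - A i (e i) ≤ y (e i) := by
          refine le_trans ?_ (Finset.le_sup' _ (Finset.mem_univ i))
          simp [hb0]
        refine le_trans ?_ (Finset.le_sup' (fun j => TL (A i j) (y j)) (Finset.mem_univ (e i)))
        unfold TL
        exact le_trans (by linarith) (le_max_left _ _)

  have := hmin y hyfeas hyx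
  exact ⟨e, hvalid, this.symm⟩
end
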